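/- Let w be a weight on ℝⁿ for which there exist positive constants C and ε such that w(E)/w(Q) ≤ C (|E|/|Q|)^ε for every cube Q ⊆ ℝⁿ and every measurable E ⊆ Q (i.e., w ∈ A_∞). Then there exist positive constants C₀ and ξ such that for every λ > 0 and every cube Q, |{x ∈ Q : w(x) > λ}| ≤ C₀ |Q| [ (1/(λ|Q|)) ∫_Q w(x) dx ]^{1+ξ}. In fact one may take ξ = 1/(1−ε) − 1 and C₀ = C^{1/(1−ε)}. -/

import Mathlib

open MeasureTheory Filter ENNReal

noncomputable section

/-- The half-open axis-parallel cube with lower corner `c` and side length `h`. -/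
def cube {n : ℕ} (c : Fin n → ℝ) (h : ℝ) : Set (Fin n → ℝ) :=
  Set.univ.pi fun i => Set.Ico (c i) (c i + h)

/-- The average of `g` over the set `Q`. -/
def avg {n : ℕ} (Q : Set (Fin n → ℝ)) (g : (Fin n → ℝ) → ℝ) : ℝ :=
  (volume Q).toReal⁻¹ * ∫ y in Q, g y

/-- `w` is an `A₁` Muckenhoupt weight: a locally integrable, a.e. positive function whose
average over every axis-parallel cube is controlled by its essential infimum there. -/
def IsA1 {n : ℕ} (w : (Fin n → ℝ) → ℝ) : Prop :=
  LocallyIntegrable w volume ∧ (∀ᵐ x ∂(volume : Measure (Fin n → ℝ)), 0 < w x) ∧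
    ∃ C > 0, ∀ (c : Fin n → ℝ) (h : ℝ), 0 < h →
      avg (cube c h) w ≤ C * essInf w (volume.restrict (cube c h))

/-- The `A₁` constant `[w]_{A₁}` of a weight. -/
def A1const {n : ℕ} (w : (Fin n → ℝ) → ℝ) : ℝ :=
  sInf {C : ℝ | 0 < C ∧ ∀ (c : Fin n → ℝ) (h : ℝ), 0 < h →
    avg (cube c h) w ≤ C * essInf w (volume.restrict (cube c h))}

/-- The function `Φ(t) = t^r (1 + log⁺ t)^δ`. -/
def phi (r δ t : ℝ) : ℝ := t ^ r * (1 + max 0 (Real.log t)) ^ δ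

/-- `b_k = 1 / Φ(a^{-k})`. -/
def bk (r δ a : ℝ) (k : ℤ) : ℝ := 1 / phi r δ (a ^ (-k))

/-- `Φ` is a Young function: convex, increasing, vanishing at `0`, tending to `∞`. -/
def IsYoung (Φ : ℝ → ℝ) : Prop :=
  ConvexOn ℝ (Set.Ici 0) Φ ∧ MonotoneOn Φ (Set.Ici 0) ∧ Φ 0 = 0 ∧
    Tendsto Φ atTop atTop

/-- The Luxemburg average `‖f‖_{Φ,Q}` (with value `∞` if no admissible `λ` exists). -/
def eLuxNorm {n : ℕ} (Φ : ℝ → ℝ) (f : (Fin n → ℝ) → ℝ) (Q : Set (Fin n → ℝ)) : ℝ≥0∞ :=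
  sInf (ENNReal.ofReal '' {l : ℝ | 0 < l ∧
    ∫⁻ y in Q, ENNReal.ofReal (Φ (|f y| / l)) ≤ volume Q})

/-- The Orlicz maximal operator `M_Φ`, a supremum over all cubes containing `x`. -/
def maxOrlicz {n : ℕ} (Φ : ℝ → ℝ) (f : (Fin n → ℝ) → ℝ) (x : Fin n → ℝ) : ℝ≥0∞ :=
  sSup {r : ℝ≥0∞ | ∃ (c : Fin n → ℝ) (h : ℝ), 0 < h ∧ x ∈ cube c h ∧
    r = eLuxNorm Φ f (cube c h)}

/-- The Hardy–Littlewood maximal operator over axis-parallel cubes. -/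
def maxHL {n : ℕ} (f : (Fin n → ℝ) → ℝ) (x : Fin n → ℝ) : ℝ≥0∞ :=
  sSup {r : ℝ≥0∞ | ∃ (c : Fin n → ℝ) (h : ℝ), 0 < h ∧ x ∈ cube c h ∧
    r = ENNReal.ofReal (avg (cube c h) fun y => |f y|)}

/-- `M_r f = M(|f|^r)^{1/r}`. -/
def maxR {n : ℕ} (r : ℝ) (f : (Fin n → ℝ) → ℝ) (x : Fin n → ℝ) : ℝ≥0∞ :=
  maxHL (fun y => |f y| ^ r) x ^ (1 / r)

/-- A dyadic grid: its cubes are recorded as pairs (lower corner `c`, scale `k`), the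
corresponding cube being `cube c (2^k)`.  Any two cubes of the grid are nested or
disjoint, and for each scale `k` the cubes of that scale partition `ℝⁿ`. -/
structure DyadicGrid (n : ℕ) where
  cubes : Set ((Fin n → ℝ) × ℤ)
  nested : ∀ p ∈ cubes, ∀ q ∈ cubes,
    (cube p.1 ((2:ℝ) ^ p.2) ∩ cube q.1 ((2:ℝ) ^ q.2)).Nonempty →
      cube p.1 ((2:ℝ) ^ p.2) ⊆ cube q.1 ((2:ℝ) ^ q.2) ∨
        cube q.1 ((2:ℝ) ^ q.2) ⊆ cube p.1 ((2:ℝ) ^ p.2)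
  partition : ∀ (k : ℤ) (x : Fin n → ℝ), ∃! c : Fin n → ℝ,
    (c, k) ∈ cubes ∧ x ∈ cube c ((2:ℝ) ^ k)

/-- The dyadic Orlicz maximal operator `M_{Φ,D}`. -/
def maxOrliczD {n : ℕ} (D : DyadicGrid n) (Φ : ℝ → ℝ) (f : (Fin n → ℝ) → ℝ)
    (x : Fin n → ℝ) : ℝ≥0∞ :=
  sSup {r : ℝ≥0∞ | ∃ p ∈ D.cubes, x ∈ cube p.1 ((2:ℝ) ^ p.2) ∧
    r = eLuxNorm Φ f (cube p.1 ((2:ℝ) ^ p.2))}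

/-- The dyadic Hardy–Littlewood maximal operator `M_D`. -/
def maxD {n : ℕ} (D : DyadicGrid n) (v : (Fin n → ℝ) → ℝ) (x : Fin n → ℝ) : ℝ≥0∞ :=
  sSup {r : ℝ≥0∞ | ∃ p ∈ D.cubes, x ∈ cube p.1 ((2:ℝ) ^ p.2) ∧
    r = ENNReal.ofReal (avg (cube p.1 ((2:ℝ) ^ p.2)) v)}

/-- `w ∈ A_q`, `1 < q < ∞`. -/
def IsAq {n : ℕ} (w : (Fin n → ℝ) → ℝ) (q : ℝ) : Prop :=
  LocallyIntegrable w volume ∧ (∀ᵐ x ∂(volume : Measure (Fin n → ℝ)), 0 < w x) ∧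
    ∃ C > 0, ∀ (c : Fin n → ℝ) (h : ℝ), 0 < h →
      avg (cube c h) w * avg (cube c h) (fun x => w x ^ (1 - q / (q - 1))) ^ (q - 1) ≤ C


/-- Lemma 1 of the paper. Good-λ type estimate for `A_∞` weights. -/
theorem Ainfty_level_set_estimate {n : ℕ} (w : (Fin n → ℝ) → ℝ)
    (hw : LocallyIntegrable w volume)
    (hwpos : ∀ᵐ x ∂(volume : Measure (Fin n → ℝ)), 0 < w x)
    (C ε : ℝ) (hC : 0 < C) (hε : 0 < ε)
    (hAinf : ∀ (c : Fin n → ℝ) (h : ℝ), 0 < h → ∀ E ⊆ cube c h, MeasurableSet E →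
      ∫ x in E, w x ≤
        C * ((volume E).toReal / (volume (cube c h)).toReal) ^ ε * ∫ x in cube c h, w x) :
    ∃ C₀ : ℝ, 0 < C₀ ∧ ∃ ξ : ℝ, 0 < ξ ∧ ∀ lam : ℝ, 0 < lam →
      ∀ (c : Fin n → ℝ) (h : ℝ), 0 < h →
      (volume {x ∈ cube c h | lam < w x}).toReal ≤
        C₀ * (volume (cube c h)).toReal *
          ((lam * (volume (cube c h)).toReal)⁻¹ * ∫ x in cube c h, w x) ^ (1 + ξ) := by
  -- Replace ε by e = min ε (1/2) < 1; the hypothesis still holds since |E|/|Q| ≤ 1.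
  set e : ℝ := min ε (1/2) with he_def
  have he0 : 0 < e := lt_min hε (by norm_num)
  have he1 : e < 1 := lt_of_le_of_lt (min_le_right _ _) (by norm_num)
  have hes : (0:ℝ) < 1 - e := by linarith
  set s : ℝ := (1 - e)⁻¹ with hs_def
  have hs0 : 0 < s := inv_pos.2 hes
  have hs1 : 1 < s := (one_lt_inv_iff₀).2 ⟨hes, by linarith⟩
  refine ⟨C ^ s, Real.rpow_pos_of_pos hC s, s - 1, by linarith, ?_⟩
  intro lam hlam c h hh
  have h1s : 1 + (s - 1) = s := by ring
  rw [h1s]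
  -- basic facts about the cube
  set Q : Set (Fin n → ℝ) := cube c h with hQ_def
  have hQmeas : MeasurableSet Q :=
    MeasurableSet.univ_pi fun i => measurableSet_Ico
  have hQvol : volume Q = (ENNReal.ofReal h) ^ n := by
    rw [hQ_def, cube, volume_pi_pi]
    simp [Real.volume_Ico]
  have hQfin : volume Q ≠ ∞ := by
    rw [hQvol]; exact ENNReal.pow_ne_top ofReal_ne_top
  have hQposE : 0 < volume Q := by
    rw [hQvol]
    exact ENNReal.pow_pos (ENNReal.ofReal_pos.2 hh) n
  set Qv : ℝ := (volume Q).toReal with hQv_def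
  have hQv : 0 < Qv := ENNReal.toReal_pos hQposE.ne' hQfin
  -- integrability of w on Q
  have hIntQ : IntegrableOn w Q := by
    have hK : IsCompact (Set.univ.pi fun i => Set.Icc (c i) (c i + h)) :=
      isCompact_univ_pi fun i => isCompact_Icc
    have hsub : Q ⊆ Set.univ.pi fun i => Set.Icc (c i) (c i + h) := by
      intro x hx i _
      exact Set.Ico_subset_Icc_self (hx i trivial)
    exact (hw.integrableOn_isCompact hK).mono_set hsub
  set I : ℝ := ∫ x in Q, w x with hI_def
  have hInn : 0 ≤ I := by
    apply integral_nonneg_of_ae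
    exact ae_restrict_of_ae (hwpos.mono fun x hx => hx.le)
  -- measurable representative
  have hgae : AEStronglyMeasurable w volume := hw.aestronglyMeasurable
  set g : (Fin n → ℝ) → ℝ := hgae.mk w with hg_def
  have hgmeas : Measurable g := hgae.stronglyMeasurable_mk.measurable
  set E : Set (Fin n → ℝ) := Q ∩ {x | lam < g x} with hE_def
  have hEmeas : MeasurableSet E :=
    hQmeas.inter (measurableSet_lt measurable_const hgmeas)
  have hEsub : E ⊆ Q := Set.inter_subset_left
  have hvol_eq : volume {x ∈ Q | lam < w x} = volume E := by
    apply measure_congr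
    rw [Filter.eventuallyEq_set]
    filter_upwards [hgae.ae_eq_mk] with x hx
    simp only [hE_def, Set.mem_inter_iff, Set.mem_setOf_eq, hx, hg_def]
  rw [hvol_eq]
  set A : ℝ := (volume E).toReal with hA_def
  have hAnn : 0 ≤ A := ENNReal.toReal_nonneg
  have hAQ : A ≤ Qv := by
    apply ENNReal.toReal_mono hQfin (measure_mono hEsub)
  -- right-hand side auxiliary nonnegativity
  have hXnn : 0 ≤ (lam * Qv)⁻¹ * I :=
    mul_nonneg (inv_nonneg.2 (mul_nonneg hlam.le hQv.le)) hInn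
  rcases eq_or_lt_of_le hAnn with hA0 | hA0
  · rw [← hA0]
    exact mul_nonneg (mul_nonneg (Real.rpow_pos_of_pos hC s).le hQv.le)
      (Real.rpow_nonneg hXnn s)
  -- main chain: lam * A ≤ ∫_E w ≤ C (A/Qv)^ε I ≤ C (A/Qv)^e I
  have hEfin : volume E ≠ ∞ := (lt_of_le_of_lt (measure_mono hEsub) hQfin.lt_top).ne
  have hle1 : lam * A ≤ ∫ x in E, w x := by
    have hconst : IntegrableOn (fun _ => lam) E :=
      integrableOn_const hEfin
    have hae : (fun _ => lam) ≤ᵐ[volume.restrict E] w := by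
      rw [Filter.EventuallyLE, ae_restrict_iff' hEmeas]
      filter_upwards [hgae.ae_eq_mk] with x hx hxE
      rw [hx]
      exact hxE.2.le
    calc lam * A = ∫ _ in E, lam := by rw [setIntegral_const]; simp [mul_comm]; exact Or.inl rfl
      _ ≤ ∫ x in E, w x := setIntegral_mono_ae_restrict hconst (hIntQ.mono_set hEsub) hae
  have hle2 : ∫ x in E, w x ≤ C * (A / Qv) ^ ε * I := hAinf c h hh E hEsub hEmeas
  have htQ : A / Qv ≤ 1 := (div_le_one hQv).2 hAQ
  have ht0 : 0 < A / Qv := div_pos hA0 hQv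
  have hle3 : C * (A / Qv) ^ ε * I ≤ C * (A / Qv) ^ e * I := by
    apply mul_le_mul_of_nonneg_right _ hInn
    apply mul_le_mul_of_nonneg_left _ hC.le
    exact Real.rpow_le_rpow_of_exponent_ge ht0 htQ (min_le_left _ _)
  have hkey : lam * A ≤ C * (A / Qv) ^ e * I := le_trans (le_trans hle1 hle2) hle3
  -- solve for t = A/Qv
  set t : ℝ := A / Qv with ht_def
  have h2 : t ^ (1 - e) ≤ C * I / (lam * Qv) := by
    rw [Real.rpow_sub ht0, Real.rpow_one, div_le_div_iff₀ (Real.rpow_pos_of_pos ht0 e)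
      (mul_pos hlam hQv)]
    have hAtQ : A = t * Qv := by rw [ht_def, div_mul_cancel₀ A hQv.ne']
    calc t * (lam * Qv) = lam * (t * Qv) := by ring
      _ = lam * A := by rw [← hAtQ]
      _ ≤ C * t ^ e * I := hkey
      _ = C * I * t ^ e := by ring
  have h3 : t ≤ (C * I / (lam * Qv)) ^ s := by
    have ht_eq : t = (t ^ (1 - e)) ^ s := by
      rw [← Real.rpow_mul ht0.le, mul_inv_cancel₀ hes.ne', Real.rpow_one]
    calc t = (t ^ (1 - e)) ^ s := ht_eq
      _ ≤ (C * I / (lam * Qv)) ^ s :=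
        Real.rpow_le_rpow (Real.rpow_nonneg ht0.le _) h2 hs0.le
  have hfin : A ≤ (C * I / (lam * Qv)) ^ s * Qv := by
    have := mul_le_mul_of_nonneg_right h3 hQv.le
    calc A = t * Qv := by rw [ht_def, div_mul_cancel₀ A hQv.ne']
      _ ≤ (C * I / (lam * Qv)) ^ s * Qv := this
  calc A ≤ (C * I / (lam * Qv)) ^ s * Qv := hfin
    _ = (C * ((lam * Qv)⁻¹ * I)) ^ s * Qv := by
        rw [show C * I / (lam * Qv) = C * ((lam * Qv)⁻¹ * I) by ring]
    _ = C ^ s * ((lam * Qv)⁻¹ * I) ^ s * Qv := by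
        rw [Real.mul_rpow hC.le hXnn]
    _ = C ^ s * Qv * ((lam * Qv)⁻¹ * I) ^ s := by ring

end
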